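/- Let $C_{10} > 0$, $\alpha \in (0,1)$, and let $f : [R, \infty) \to [0,\infty)$ be a non-increasing function with $\lim_{r\to\infty} f(r) = 0$ satisfying $C_{10} \int_r^\infty f(t)^\alpha\,dt \leq f(r)$ for all $r \geq R$. If $f(R)$ is sufficiently small (depending only on $C_{10}$ and $\alpha$), then $f(R+1) = 0$. -/

import Mathlib

open MeasureTheory
open scoped ENNReal

theorem iteration_lemma {C₁₀ : ℝ} (hC : 0 < C₁₀) {α : ℝ} (hα0 : 0 < α) (hα1 : α < 1) :
    ∃ δ > (0 : ℝ), ∀ (R : ℝ) (f : ℝ → ℝ),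
      (∀ r ∈ Set.Ici R, 0 ≤ f r) →
      AntitoneOn f (Set.Ici R) →
      Filter.Tendsto f Filter.atTop (nhds 0) →
      (∀ r ∈ Set.Ici R,
        ENNReal.ofReal C₁₀ * ∫⁻ t in Set.Ici r, ENNReal.ofReal (f t ^ α)
          ≤ ENNReal.ofReal (f r)) →
      f R ≤ δ → f (R + 1) = 0 := by
  have h1α : (0:ℝ) < 1 - α := by linarith
  set q : ℝ := (1/4 : ℝ) ^ (1/(1-α)) with hq_def
  have hq0 : 0 < q := Real.rpow_pos_of_pos (by norm_num) _
  have hq1 : q < 1 := Real.rpow_lt_one (by norm_num) (by norm_num) (by positivity)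
  have hqpow : q ^ (1 - α) = 1/4 := by
    rw [hq_def, ← Real.rpow_mul (by norm_num), one_div (1-α),
      inv_mul_cancel₀ h1α.ne', Real.rpow_one]
  have hq4 : q ^ α = 4 * q := by
    have : q ^ α = q ^ (1 - (1 - α)) := by ring_nf
    rw [this, Real.rpow_sub hq0, Real.rpow_one, hqpow]
    field_simp
  set δ : ℝ := (C₁₀ * q ^ α / 2) ^ (1/(1-α)) with hδ_def
  have hδ0 : 0 < δ := Real.rpow_pos_of_pos (by positivity) _
  have hδpow : δ ^ (1 - α) = C₁₀ * q ^ α / 2 := by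
    rw [hδ_def, ← Real.rpow_mul (by positivity), one_div (1-α),
      inv_mul_cancel₀ h1α.ne', Real.rpow_one]
  have hδα : δ ^ α = 2 * δ / (C₁₀ * (4 * q)) := by
    have h1 : δ ^ α = δ ^ (1 - (1 - α)) := by ring_nf
    rw [h1, Real.rpow_sub hδ0, Real.rpow_one, hδpow, hq4]
    field_simp
  refine ⟨δ, hδ0, ?_⟩
  intro R f hf0 hmono _htend hint hfR
  set Rk : ℕ → ℝ := fun k => R + 1 - (1/2 : ℝ) ^ k with hRk_def
  have hhalf_le : ∀ k : ℕ, ((1:ℝ)/2) ^ k ≤ 1 := fun k =>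
    pow_le_one₀ (by norm_num) (by norm_num)
  have hhalf_pos : ∀ k : ℕ, (0:ℝ) < (1/2 : ℝ) ^ k := fun k => by positivity
  have hRk_mem : ∀ k, Rk k ∈ Set.Ici R := by
    intro k
    simp only [hRk_def, Set.mem_Ici]
    have := hhalf_le k
    linarith
  have hRk_le : ∀ k, Rk k ≤ R + 1 := by
    intro k
    simp only [hRk_def]
    have := hhalf_pos k
    linarith
  have hRk_lt : ∀ k, Rk k < Rk (k+1) := by
    intro k
    simp only [hRk_def, pow_succ]
    have := hhalf_pos k
    linarith
  -- the key step inequality from the integral hypothesis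
  have step : ∀ k : ℕ, C₁₀ * ((1/2 : ℝ) ^ (k+1) * f (Rk (k+1)) ^ α) ≤ f (Rk k) := by
    intro k
    have hmemk := hRk_mem k
    have hmemk1 := hRk_mem (k+1)
    have hfk1 : 0 ≤ f (Rk (k+1)) := hf0 _ hmemk1
    have hconst : ENNReal.ofReal (f (Rk (k+1)) ^ α) * volume (Set.Ioc (Rk k) (Rk (k+1)))
        ≤ ∫⁻ t in Set.Ioc (Rk k) (Rk (k+1)), ENNReal.ofReal (f t ^ α) := by
      rw [← setLIntegral_const]
      refine setLIntegral_mono' measurableSet_Ioc ?_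
      intro t ht
      refine ENNReal.ofReal_le_ofReal ?_
      refine Real.rpow_le_rpow hfk1 ?_ hα0.le
      exact hmono (Set.mem_Ici.mpr (le_trans (hRk_mem k) ht.1.le)) hmemk1 ht.2
    have hsub : (∫⁻ t in Set.Ioc (Rk k) (Rk (k+1)), ENNReal.ofReal (f t ^ α))
        ≤ ∫⁻ t in Set.Ici (Rk k), ENNReal.ofReal (f t ^ α) :=
      lintegral_mono_set (fun t ht => Set.mem_Ici.mpr ht.1.le)
    have hvol : volume (Set.Ioc (Rk k) (Rk (k+1))) = ENNReal.ofReal ((1/2:ℝ) ^ (k+1)) := by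
      rw [Real.volume_Ioc]
      congr 1
      simp only [hRk_def, pow_succ]
      ring
    have hchain : ENNReal.ofReal C₁₀ *
        (ENNReal.ofReal (f (Rk (k+1)) ^ α) * ENNReal.ofReal ((1/2:ℝ) ^ (k+1)))
        ≤ ENNReal.ofReal (f (Rk k)) := by
      calc ENNReal.ofReal C₁₀ *
          (ENNReal.ofReal (f (Rk (k+1)) ^ α) * ENNReal.ofReal ((1/2:ℝ) ^ (k+1)))
          = ENNReal.ofReal C₁₀ *
            (ENNReal.ofReal (f (Rk (k+1)) ^ α) * volume (Set.Ioc (Rk k) (Rk (k+1)))) := by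
            rw [hvol]
        _ ≤ ENNReal.ofReal C₁₀ * ∫⁻ t in Set.Ici (Rk k), ENNReal.ofReal (f t ^ α) :=
            mul_le_mul_right (hconst.trans hsub) _
        _ ≤ ENNReal.ofReal (f (Rk k)) := hint _ hmemk
    rw [← ENNReal.ofReal_mul (by positivity), ← ENNReal.ofReal_mul hC.le] at hchain
    have := (ENNReal.ofReal_le_ofReal_iff (hf0 _ hmemk)).mp hchain
    calc C₁₀ * ((1/2 : ℝ) ^ (k+1) * f (Rk (k+1)) ^ α)
        = C₁₀ * (f (Rk (k+1)) ^ α * (1/2:ℝ) ^ (k+1)) := by ring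
      _ ≤ f (Rk k) := this
  -- induction: f (Rk k) ≤ δ * q ^ k
  have hw : ∀ k : ℕ, f (Rk k) ≤ δ * q ^ k := by
    intro k
    induction k with
    | zero =>
      have : Rk 0 = R := by simp [hRk_def]
      rw [this]
      simpa using hfR
    | succ k ih =>
      have hstep := step k
      have hfk1 : 0 ≤ f (Rk (k+1)) := hf0 _ (hRk_mem (k+1))
      -- f (Rk (k+1)) ^ α ≤ δ * q^k * 2^(k+1) / C₁₀
      have h2 : ((1:ℝ)/2) ^ (k+1) * 2 ^ (k+1) = 1 := by
        rw [← mul_pow]; norm_num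
      have ha : f (Rk (k+1)) ^ α ≤ δ * q ^ k * 2 ^ (k+1) / C₁₀ := by
        rw [le_div_iff₀ hC]
        have h3 : C₁₀ * ((1/2 : ℝ) ^ (k+1) * f (Rk (k+1)) ^ α) ≤ δ * q ^ k :=
          hstep.trans ih
        calc f (Rk (k+1)) ^ α * C₁₀
            = C₁₀ * ((1/2 : ℝ) ^ (k+1) * f (Rk (k+1)) ^ α) * 2 ^ (k+1) := by
              linear_combination (-(C₁₀ * f (Rk (k+1)) ^ α)) * h2
          _ ≤ δ * q ^ k * 2 ^ (k+1) :=
              mul_le_mul_of_nonneg_right h3 (by positivity)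
      -- algebra: δ * q^k * 2^(k+1) / C₁₀ ≤ (δ * q^(k+1))^α
      have hkey : δ * q ^ k * 2 ^ (k+1) / C₁₀ ≤ (δ * q ^ (k+1)) ^ α := by
        have hrhs : (δ * q ^ (k+1)) ^ α = (2 * δ / C₁₀) * (4 * q) ^ k := by
          rw [Real.mul_rpow hδ0.le (by positivity), ← Real.rpow_natCast q (k+1),
            ← Real.rpow_mul hq0.le,
            show ((k+1:ℕ):ℝ) * α = α * (k:ℝ) + α by push_cast; ring,
            Real.rpow_add hq0, Real.rpow_mul hq0.le, Real.rpow_natCast,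
            hδα, hq4]
          field_simp
        have hlhs : δ * q ^ k * 2 ^ (k+1) / C₁₀ = (2 * δ / C₁₀) * (2 * q) ^ k := by
          rw [mul_pow, pow_succ]
          field_simp
        rw [hlhs, hrhs]
        refine mul_le_mul_of_nonneg_left ?_ (by positivity)
        exact pow_le_pow_left₀ (by positivity) (by linarith) k
      have : f (Rk (k+1)) ^ α ≤ (δ * q ^ (k+1)) ^ α := ha.trans hkey
      exact (Real.rpow_le_rpow_iff hfk1 (by positivity) hα0).mp this
  -- conclude
  have hfin : ∀ k : ℕ, f (R + 1) ≤ δ * q ^ k := by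
    intro k
    exact (hmono (hRk_mem k) (Set.mem_Ici.mpr (by linarith)) (hRk_le k)).trans (hw k)
  have htend0 : Filter.Tendsto (fun k : ℕ => δ * q ^ k) Filter.atTop (nhds 0) := by
    have := tendsto_pow_atTop_nhds_zero_of_lt_one hq0.le hq1
    simpa using this.const_mul δ
  have hle0 : f (R + 1) ≤ 0 := ge_of_tendsto' htend0 hfin
  have hge0 : 0 ≤ f (R + 1) := hf0 _ (Set.mem_Ici.mpr (by linarith))
  linarith
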